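/- The real Lie algebra 𝔲 := {X ∈ Mat₂(ℍ) : Xᴴ η + η X = 0 and XΦ = ΦX} (with η = diag(-1,1) and bracket the matrix commutator) is isomorphic, as a real Lie algebra, to 𝔰𝔬(1,3) := {Y ∈ Mat₄(ℝ) : Yᵀ η₄ + η₄ Y = 0} with η₄ = diag(-1,1,1,1) and bracket the matrix commutator. -/

import Mathlib

/- Statement 10: the real Lie algebra 𝔲 is isomorphic to 𝔰𝔬(1,3). -/

open Quaternion Matrix

set_option maxHeartbeats 8000000

noncomputable section

/-- The quaternions over ℝ. -/
abbrev Quat := Quaternion ℝ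

/-- The matrix η = diag(-1,1). -/
def eta2 : Matrix (Fin 2) (Fin 2) Quat := Matrix.diagonal ![-1, 1]

/-- The matrix Φ = [[0,-1],[1,0]]. -/
def Phi : Matrix (Fin 2) (Fin 2) Quat := !![0, -1; 1, 0]

/-- The Lie algebra 𝔲 ⊂ Mat₂(ℍ), as a set. -/
def uSet : Set (Matrix (Fin 2) (Fin 2) Quat) :=
  {X | Xᴴ * eta2 + eta2 * X = 0 ∧ X * Phi = Phi * X}

/-- The matrix η₄ = diag(-1,1,1,1). -/
def eta4 : Matrix (Fin 4) (Fin 4) ℝ := Matrix.diagonal ![-1, 1, 1, 1]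

/-- The Lie algebra 𝔰𝔬(1,3) ⊂ Mat₄(ℝ), as a set. -/
def so13Set : Set (Matrix (Fin 4) (Fin 4) ℝ) :=
  {Y | Yᵀ * eta4 + eta4 * Y = 0}

lemma eta4_eq : eta4 = !![(-1:ℝ),0,0,0; 0,1,0,0; 0,0,1,0; 0,0,0,1] := by
  refine Matrix.ext fun i j => ?_
  fin_cases i <;> fin_cases j <;> simp [eta4, Matrix.diagonal_apply, Matrix.vecHead, Matrix.vecTail]

lemma star_pure {a : Quat} (h : a.re = 0) : star a = -a := by
  apply Quaternion.ext <;> simp [h]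

/-- The raw map. -/
def Fraw (X : Matrix (Fin 2) (Fin 2) Quat) : Matrix (Fin 4) (Fin 4) ℝ :=
    !![0, 2*(X 1 0).imI, 2*(X 1 0).imJ, 2*(X 1 0).imK;
       2*(X 1 0).imI, 0, -2*(X 0 0).imK, 2*(X 0 0).imJ;
       2*(X 1 0).imJ, 2*(X 0 0).imK, 0, -2*(X 0 0).imI;
       2*(X 1 0).imK, -2*(X 0 0).imJ, 2*(X 0 0).imI, 0]

/-- The linear map. -/
def Fmap : Matrix (Fin 2) (Fin 2) Quat →ₗ[ℝ] Matrix (Fin 4) (Fin 4) ℝ where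
  toFun := Fraw
  map_add' X Y := by
    ext i j
    fin_cases i <;> fin_cases j <;>
      simp [Fraw, Matrix.add_apply] <;> ring
  map_smul' r X := by
    ext i j
    fin_cases i <;> fin_cases j <;>
      simp [Fraw, Matrix.smul_apply, Quaternion.imI_smul, Quaternion.imJ_smul,
        Quaternion.imK_smul, smul_eq_mul] <;> ring

@[simp] lemma Fmap_apply (X : Matrix (Fin 2) (Fin 2) Quat) : Fmap X = Fraw X := rfl

/-- Candidate inverse. -/
def Gmap (Y : Matrix (Fin 4) (Fin 4) ℝ) : Matrix (Fin 2) (Fin 2) Quat :=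
  !![⟨0, -(Y 2 3)/2, Y 1 3/2, -(Y 1 2)/2⟩, -⟨0, Y 0 1/2, Y 0 2/2, Y 0 3/2⟩;
     ⟨0, Y 0 1/2, Y 0 2/2, Y 0 3/2⟩, ⟨0, -(Y 2 3)/2, Y 1 3/2, -(Y 1 2)/2⟩]

lemma mem_uSet_iff (X : Matrix (Fin 2) (Fin 2) Quat) :
    X ∈ uSet ↔ (X 0 0).re = 0 ∧ (X 1 0).re = 0 ∧ X 0 1 = -(X 1 0) ∧ X 1 1 = X 0 0 := by
  constructor
  · rintro ⟨h1, h2⟩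
    have e00 := congrFun (congrFun h1 0) 0
    have e10 := congrFun (congrFun h1 1) 0
    have p00 := congrFun (congrFun h2 0) 0
    have p01 := congrFun (congrFun h2 0) 1
    simp [Matrix.mul_apply, Fin.sum_univ_two, eta2, Phi, Matrix.add_apply,
      Matrix.conjTranspose_apply] at e00 e10 p00 p01
    refine ⟨?_, ?_, p00, p01.symm⟩
    · have h := congrArg QuaternionAlgebra.re e00
      simp at h
      linarith
    · rw [p00] at e10
      have h := congrArg QuaternionAlgebra.re e10
      simp at h
      linarith
  · rintro ⟨h1, h2, h3, h4⟩
    constructor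
    · refine Matrix.ext fun i j => ?_
      fin_cases i <;> fin_cases j <;>
        simp [Matrix.mul_apply, Fin.sum_univ_two, eta2, Matrix.add_apply,
          Matrix.conjTranspose_apply, h3, h4, star_pure h1, star_pure h2]
    · refine Matrix.ext fun i j => ?_
      fin_cases i <;> fin_cases j <;>
        simp [Matrix.mul_apply, Fin.sum_univ_two, Phi, h3, h4]

lemma bracket_key (X Y : Matrix (Fin 2) (Fin 2) Quat)
    (ha : (X 0 0).re = 0) (hc : (X 1 0).re = 0) (hb : X 0 1 = -(X 1 0)) (hd : X 1 1 = X 0 0)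
    (ha' : (Y 0 0).re = 0) (hc' : (Y 1 0).re = 0) (hb' : Y 0 1 = -(Y 1 0)) (hd' : Y 1 1 = Y 0 0) :
    Fraw (X*Y - Y*X) = Fraw X * Fraw Y - Fraw Y * Fraw X := by
  have e00 : Fraw (X*Y - Y*X) 0 0 = (Fraw X * Fraw Y - Fraw Y * Fraw X) 0 0 := by
    simp [Fraw, Matrix.mul_apply, Fin.sum_univ_two, Fin.sum_univ_four, Matrix.sub_apply,
      hb, hd, hb', hd', Quaternion.imI_mul, Quaternion.imJ_mul, Quaternion.imK_mul,
      Quaternion.re_mul, ha, hc, ha', hc'] <;> ring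
  have e01 : Fraw (X*Y - Y*X) 0 1 = (Fraw X * Fraw Y - Fraw Y * Fraw X) 0 1 := by
    simp [Fraw, Matrix.mul_apply, Fin.sum_univ_two, Fin.sum_univ_four, Matrix.sub_apply,
      hb, hd, hb', hd', Quaternion.imI_mul, Quaternion.imJ_mul, Quaternion.imK_mul,
      Quaternion.re_mul, ha, hc, ha', hc'] <;> ring
  have e02 : Fraw (X*Y - Y*X) 0 2 = (Fraw X * Fraw Y - Fraw Y * Fraw X) 0 2 := by
    simp [Fraw, Matrix.mul_apply, Fin.sum_univ_two, Fin.sum_univ_four, Matrix.sub_apply,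
      hb, hd, hb', hd', Quaternion.imI_mul, Quaternion.imJ_mul, Quaternion.imK_mul,
      Quaternion.re_mul, ha, hc, ha', hc'] <;> ring
  have e03 : Fraw (X*Y - Y*X) 0 3 = (Fraw X * Fraw Y - Fraw Y * Fraw X) 0 3 := by
    simp [Fraw, Matrix.mul_apply, Fin.sum_univ_two, Fin.sum_univ_four, Matrix.sub_apply,
      hb, hd, hb', hd', Quaternion.imI_mul, Quaternion.imJ_mul, Quaternion.imK_mul,
      Quaternion.re_mul, ha, hc, ha', hc'] <;> ring
  have e10 : Fraw (X*Y - Y*X) 1 0 = (Fraw X * Fraw Y - Fraw Y * Fraw X) 1 0 := by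
    simp [Fraw, Matrix.mul_apply, Fin.sum_univ_two, Fin.sum_univ_four, Matrix.sub_apply,
      hb, hd, hb', hd', Quaternion.imI_mul, Quaternion.imJ_mul, Quaternion.imK_mul,
      Quaternion.re_mul, ha, hc, ha', hc'] <;> ring
  have e11 : Fraw (X*Y - Y*X) 1 1 = (Fraw X * Fraw Y - Fraw Y * Fraw X) 1 1 := by
    simp [Fraw, Matrix.mul_apply, Fin.sum_univ_two, Fin.sum_univ_four, Matrix.sub_apply,
      hb, hd, hb', hd', Quaternion.imI_mul, Quaternion.imJ_mul, Quaternion.imK_mul,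
      Quaternion.re_mul, ha, hc, ha', hc'] <;> ring
  have e12 : Fraw (X*Y - Y*X) 1 2 = (Fraw X * Fraw Y - Fraw Y * Fraw X) 1 2 := by
    simp [Fraw, Matrix.mul_apply, Fin.sum_univ_two, Fin.sum_univ_four, Matrix.sub_apply,
      hb, hd, hb', hd', Quaternion.imI_mul, Quaternion.imJ_mul, Quaternion.imK_mul,
      Quaternion.re_mul, ha, hc, ha', hc'] <;> ring
  have e13 : Fraw (X*Y - Y*X) 1 3 = (Fraw X * Fraw Y - Fraw Y * Fraw X) 1 3 := by
    simp [Fraw, Matrix.mul_apply, Fin.sum_univ_two, Fin.sum_univ_four, Matrix.sub_apply,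
      hb, hd, hb', hd', Quaternion.imI_mul, Quaternion.imJ_mul, Quaternion.imK_mul,
      Quaternion.re_mul, ha, hc, ha', hc'] <;> ring
  have e20 : Fraw (X*Y - Y*X) 2 0 = (Fraw X * Fraw Y - Fraw Y * Fraw X) 2 0 := by
    simp [Fraw, Matrix.mul_apply, Fin.sum_univ_two, Fin.sum_univ_four, Matrix.sub_apply,
      hb, hd, hb', hd', Quaternion.imI_mul, Quaternion.imJ_mul, Quaternion.imK_mul,
      Quaternion.re_mul, ha, hc, ha', hc'] <;> ring
  have e21 : Fraw (X*Y - Y*X) 2 1 = (Fraw X * Fraw Y - Fraw Y * Fraw X) 2 1 := by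
    simp [Fraw, Matrix.mul_apply, Fin.sum_univ_two, Fin.sum_univ_four, Matrix.sub_apply,
      hb, hd, hb', hd', Quaternion.imI_mul, Quaternion.imJ_mul, Quaternion.imK_mul,
      Quaternion.re_mul, ha, hc, ha', hc'] <;> ring
  have e22 : Fraw (X*Y - Y*X) 2 2 = (Fraw X * Fraw Y - Fraw Y * Fraw X) 2 2 := by
    simp [Fraw, Matrix.mul_apply, Fin.sum_univ_two, Fin.sum_univ_four, Matrix.sub_apply,
      hb, hd, hb', hd', Quaternion.imI_mul, Quaternion.imJ_mul, Quaternion.imK_mul,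
      Quaternion.re_mul, ha, hc, ha', hc'] <;> ring
  have e23 : Fraw (X*Y - Y*X) 2 3 = (Fraw X * Fraw Y - Fraw Y * Fraw X) 2 3 := by
    simp [Fraw, Matrix.mul_apply, Fin.sum_univ_two, Fin.sum_univ_four, Matrix.sub_apply,
      hb, hd, hb', hd', Quaternion.imI_mul, Quaternion.imJ_mul, Quaternion.imK_mul,
      Quaternion.re_mul, ha, hc, ha', hc'] <;> ring
  have e30 : Fraw (X*Y - Y*X) 3 0 = (Fraw X * Fraw Y - Fraw Y * Fraw X) 3 0 := by
    simp [Fraw, Matrix.mul_apply, Fin.sum_univ_two, Fin.sum_univ_four, Matrix.sub_apply,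
      hb, hd, hb', hd', Quaternion.imI_mul, Quaternion.imJ_mul, Quaternion.imK_mul,
      Quaternion.re_mul, ha, hc, ha', hc'] <;> ring
  have e31 : Fraw (X*Y - Y*X) 3 1 = (Fraw X * Fraw Y - Fraw Y * Fraw X) 3 1 := by
    simp [Fraw, Matrix.mul_apply, Fin.sum_univ_two, Fin.sum_univ_four, Matrix.sub_apply,
      hb, hd, hb', hd', Quaternion.imI_mul, Quaternion.imJ_mul, Quaternion.imK_mul,
      Quaternion.re_mul, ha, hc, ha', hc'] <;> ring
  have e32 : Fraw (X*Y - Y*X) 3 2 = (Fraw X * Fraw Y - Fraw Y * Fraw X) 3 2 := by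
    simp [Fraw, Matrix.mul_apply, Fin.sum_univ_two, Fin.sum_univ_four, Matrix.sub_apply,
      hb, hd, hb', hd', Quaternion.imI_mul, Quaternion.imJ_mul, Quaternion.imK_mul,
      Quaternion.re_mul, ha, hc, ha', hc'] <;> ring
  have e33 : Fraw (X*Y - Y*X) 3 3 = (Fraw X * Fraw Y - Fraw Y * Fraw X) 3 3 := by
    simp [Fraw, Matrix.mul_apply, Fin.sum_univ_two, Fin.sum_univ_four, Matrix.sub_apply,
      hb, hd, hb', hd', Quaternion.imI_mul, Quaternion.imJ_mul, Quaternion.imK_mul,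
      Quaternion.re_mul, ha, hc, ha', hc'] <;> ring
  refine Matrix.ext fun i j => ?_
  fin_cases i <;> fin_cases j <;> [exact e00; exact e01; exact e02; exact e03; exact e10; exact e11; exact e12; exact e13; exact e20; exact e21; exact e22; exact e23; exact e30; exact e31; exact e32; exact e33]

theorem u_isomorphic_so13 :
    ∃ f : Matrix (Fin 2) (Fin 2) Quat →ₗ[ℝ] Matrix (Fin 4) (Fin 4) ℝ,
      Set.BijOn f uSet so13Set ∧
      ∀ X ∈ uSet, ∀ Y ∈ uSet, f (X * Y - Y * X) = f X * f Y - f Y * f X := by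
  refine ⟨Fmap, ⟨?_, ?_, ?_⟩, ?_⟩
  · -- MapsTo
    intro X _
    simp only [so13Set, Set.mem_setOf_eq, Fmap_apply]
    have ht : (Fraw X)ᵀ = !![0, 2*(X 1 0).imI, 2*(X 1 0).imJ, 2*(X 1 0).imK;
       2*(X 1 0).imI, 0, 2*(X 0 0).imK, -2*(X 0 0).imJ;
       2*(X 1 0).imJ, -2*(X 0 0).imK, 0, 2*(X 0 0).imI;
       2*(X 1 0).imK, 2*(X 0 0).imJ, -2*(X 0 0).imI, 0] := by
      refine Matrix.ext fun i j => ?_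
      fin_cases i <;> fin_cases j <;> simp [Fraw]
    rw [ht]
    ext i j
    fin_cases i <;> fin_cases j <;>
      simp [Fraw, Matrix.mul_apply, Fin.sum_univ_four, eta4_eq, Matrix.add_apply] <;> ring
  · -- InjOn
    intro X hX X' hX' hf
    rw [mem_uSet_iff] at hX hX'
    obtain ⟨ha, hc, hb, hd⟩ := hX
    obtain ⟨ha', hc', hb', hd'⟩ := hX'
    simp only [Fmap_apply] at hf
    have e1 : (X 0 0).imI = (X' 0 0).imI := by
      have := congrFun (congrFun hf 2) 3; simp [Fraw] at this; linarith
    have e2 : (X 0 0).imJ = (X' 0 0).imJ := by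
      have := congrFun (congrFun hf 1) 3; simp [Fraw] at this; linarith
    have e3 : (X 0 0).imK = (X' 0 0).imK := by
      have := congrFun (congrFun hf 1) 2; simp [Fraw] at this; linarith
    have f1 : (X 1 0).imI = (X' 1 0).imI := by
      have := congrFun (congrFun hf 0) 1; simp [Fraw] at this; linarith
    have f2 : (X 1 0).imJ = (X' 1 0).imJ := by
      have := congrFun (congrFun hf 0) 2; simp [Fraw] at this; linarith
    have f3 : (X 1 0).imK = (X' 1 0).imK := by
      have := congrFun (congrFun hf 0) 3; simp [Fraw] at this; linarith
    have k1 : X 0 0 = X' 0 0 := by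
      apply Quaternion.ext <;> simp [ha, ha', e1, e2, e3]
    have k2 : X 1 0 = X' 1 0 := by
      apply Quaternion.ext <;> simp [hc, hc', f1, f2, f3]
    refine Matrix.ext fun i j => ?_
    fin_cases i <;> fin_cases j <;> simp [hb, hb', hd, hd', k1, k2]
  · -- SurjOn
    intro Y hY
    simp only [so13Set, Set.mem_setOf_eq] at hY
    have q : ∀ i j : Fin 4, Y j i * (eta4 j j) + (eta4 i i) * Y i j = 0 := by
      intro i j
      have := congrFun (congrFun hY i) j
      simpa [Matrix.mul_apply, Matrix.add_apply, Matrix.transpose_apply, eta4,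
        Matrix.diagonal_apply, Fin.sum_univ_four] using this
    have h00 : Y 0 0 = 0 := by have := q 0 0; simp [eta4] at this; linarith
    have h11 : Y 1 1 = 0 := by have := q 1 1; simp [eta4] at this; linarith
    have h22 : Y 2 2 = 0 := by have := q 2 2; simp [eta4] at this; linarith
    have h33 : Y 3 3 = 0 := by have := q 3 3; simp [eta4] at this; linarith
    have h01 : Y 1 0 = Y 0 1 := by have := q 0 1; simp [eta4] at this; linarith
    have h02 : Y 2 0 = Y 0 2 := by have := q 0 2; simp [eta4] at this; linarith
    have h03 : Y 3 0 = Y 0 3 := by have := q 0 3; simp [eta4] at this; linarith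
    have h12 : Y 2 1 = -(Y 1 2) := by have := q 1 2; simp [eta4] at this; linarith
    have h13 : Y 3 1 = -(Y 1 3) := by have := q 1 3; simp [eta4] at this; linarith
    have h23 : Y 3 2 = -(Y 2 3) := by have := q 2 3; simp [eta4] at this; linarith
    refine ⟨Gmap Y, ?_, ?_⟩
    · rw [mem_uSet_iff]
      refine ⟨?_, ?_, ?_, ?_⟩ <;> simp [Gmap] <;> rfl
    · simp only [Fmap_apply]
      ext i j
      fin_cases i <;> fin_cases j <;>
        simp [Fraw, Gmap, h00, h11, h22, h33, h01, h02, h03, h12, h13, h23] <;> ring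
  · -- bracket
    intro X hX Y hY
    rw [mem_uSet_iff] at hX hY
    obtain ⟨ha, hc, hb, hd⟩ := hX
    obtain ⟨ha', hc', hb', hd'⟩ := hY
    simp only [Fmap_apply]
    exact bracket_key X Y ha hc hb hd ha' hc' hb' hd'
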